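/- Let (Z_m)_{m≥0} be an irreducible multi-type branching process on N_0^K in which all nonzero states are transient, with offspring generating function G : [0,1]^K → [0,1]^K. If s ∈ [0,1]^K satisfies G(s) = s and s ≠ (1,...,1), then s equals the vector of extinction probabilities q, and q_k < 1 for every k. -/

import Mathlib

open Filter

/-- The generating function of a distribution `ν` on `ℕ^K`, evaluated at `s`. -/
noncomputable def genFun {K : ℕ} (ν : (Fin K → ℕ) → ℝ) (s : Fin K → ℝ) : ℝ :=
  ∑' z : Fin K → ℕ, ν z * ∏ j, s j ^ z j

section aux

variable {K : ℕ}

lemma prodPow_nonneg {s : Fin K → ℝ} (hs0 : ∀ j, 0 ≤ s j) (z : Fin K → ℕ) :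
    0 ≤ ∏ j, s j ^ z j :=
  Finset.prod_nonneg fun j _ => pow_nonneg (hs0 j) _

lemma prodPow_le_one {s : Fin K → ℝ} (hs0 : ∀ j, 0 ≤ s j) (hs1 : ∀ j, s j ≤ 1)
    (z : Fin K → ℕ) : ∏ j, s j ^ z j ≤ 1 :=
  Finset.prod_le_one (fun j _ => pow_nonneg (hs0 j) _) fun j _ => pow_le_one₀ (hs0 j) (hs1 j)

lemma prodPow_le_single {s : Fin K → ℝ} (hs0 : ∀ j, 0 ≤ s j) (hs1 : ∀ j, s j ≤ 1)
    (z : Fin K → ℕ) (j0 : Fin K) : ∏ j, s j ^ z j ≤ s j0 ^ z j0 := by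
  rw [← Finset.mul_prod_erase Finset.univ _ (Finset.mem_univ j0)]
  calc s j0 ^ z j0 * ∏ j ∈ Finset.univ.erase j0, s j ^ z j
      ≤ s j0 ^ z j0 * 1 := by
        refine mul_le_mul_of_nonneg_left ?_ (pow_nonneg (hs0 j0) _)
        exact Finset.prod_le_one (fun j _ => pow_nonneg (hs0 j) _)
          fun j _ => pow_le_one₀ (hs0 j) (hs1 j)
    _ = s j0 ^ z j0 := mul_one _

lemma genFun_summable {ν : (Fin K → ℕ) → ℝ} (hnn : ∀ z, 0 ≤ ν z) (hsum : Summable ν)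
    {s : Fin K → ℝ} (hs0 : ∀ j, 0 ≤ s j) (hs1 : ∀ j, s j ≤ 1) :
    Summable fun z => ν z * ∏ j, s j ^ z j := by
  refine Summable.of_nonneg_of_le (fun z => mul_nonneg (hnn z) (prodPow_nonneg hs0 z))
    (fun z => ?_) hsum
  calc ν z * ∏ j, s j ^ z j ≤ ν z * 1 :=
        mul_le_mul_of_nonneg_left (prodPow_le_one hs0 hs1 z) (hnn z)
    _ = ν z := mul_one _

lemma genFun_mono {ν : (Fin K → ℕ) → ℝ} (hnn : ∀ z, 0 ≤ ν z) (hsum : Summable ν)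
    {t s : Fin K → ℝ} (ht0 : ∀ j, 0 ≤ t j) (hts : ∀ j, t j ≤ s j) (hs1 : ∀ j, s j ≤ 1) :
    genFun ν t ≤ genFun ν s := by
  have hs0 : ∀ j, 0 ≤ s j := fun j => le_trans (ht0 j) (hts j)
  have ht1 : ∀ j, t j ≤ 1 := fun j => le_trans (hts j) (hs1 j)
  refine Summable.tsum_le_tsum (fun z => ?_) (genFun_summable hnn hsum ht0 ht1)
    (genFun_summable hnn hsum hs0 hs1)
  exact mul_le_mul_of_nonneg_left
    (Finset.prod_le_prod (fun j _ => pow_nonneg (ht0 j) _)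
      (fun j _ => pow_le_pow_left₀ (ht0 j) (hts j) _)) (hnn z)

lemma genFun_zero (ν : (Fin K → ℕ) → ℝ) : genFun ν (fun _ => 0) = ν 0 := by
  unfold genFun
  rw [tsum_eq_single 0]
  · simp
  · intro z hz
    obtain ⟨j, hj⟩ := Function.ne_iff.mp hz
    have h0 : (0 : ℝ) ^ z j = 0 := zero_pow (by simpa using hj)
    rw [Finset.prod_eq_zero (Finset.mem_univ j) h0, mul_zero]

end aux

/-- Let `(Z_m)` be an irreducible multi-type branching process on `ℕ^K` (distributions
`μ k m` of `Z_m` given `Z_0 = e_k`, with the branching semigroup property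
`G^{(m+1)} = G^{(m)} ∘ G`) in which all nonzero states are transient.  If
`s ∈ [0,1]^K` satisfies `G(s) = s` and `s ≠ (1,…,1)`, then `s` equals the vector of
extinction probabilities `q`, and `q_k < 1` for every `k`. -/
theorem stmt13 {K : ℕ} (μ : Fin K → ℕ → (Fin K → ℕ) → ℝ)
    (hnn : ∀ k m z, 0 ≤ μ k m z)
    (hprob : ∀ k m, HasSum (μ k m) 1)
    (hinit : ∀ k z, μ k 0 z = if z = Pi.single k 1 then 1 else 0)
    (hiter : ∀ k m (s : Fin K → ℝ), (∀ j, 0 ≤ s j) → (∀ j, s j ≤ 1) →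
      genFun (μ k (m + 1)) s = genFun (μ k 1) (fun j => genFun (μ j m) s))
    (hirr : ∀ i j : Fin K, ∃ m : ℕ, ∃ z : Fin K → ℕ, 0 < z j ∧ 0 < μ i m z)
    (htrans : ∀ z : Fin K → ℕ, z ≠ 0 → ∀ k, Tendsto (fun m => μ k m z) atTop (nhds 0))
    (habs : ∀ k m, μ k m 0 ≤ μ k (m + 1) 0)
    (q : Fin K → ℝ) (hq : ∀ k, Tendsto (fun m => μ k m 0) atTop (nhds (q k)))
    (s : Fin K → ℝ) (hs0 : ∀ j, 0 ≤ s j) (hs1 : ∀ j, s j ≤ 1)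
    (hfix : ∀ k, genFun (μ k 1) s = s k) (hne : s ≠ fun _ => 1) :
    s = q ∧ ∀ k, q k < 1 := by
  classical
  rcases Nat.eq_zero_or_pos K with hK | hK
  · subst hK
    exact absurd (funext fun j => j.elim0) hne
  have hne' : Nonempty (Fin K) := ⟨⟨0, hK⟩⟩
  obtain ⟨k0⟩ := hne'
  haveI : Nonempty (Fin K) := ⟨k0⟩
  have hsummable : ∀ k m, Summable (μ k m) := fun k m => (hprob k m).summable
  have htsum1 : ∀ k m, ∑' z, μ k m z = 1 := fun k m => (hprob k m).tsum_eq
  -- s is a fixed point of every iterate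
  have hFix : ∀ m k, genFun (μ k m) s = s k := by
    intro m
    induction m with
    | zero =>
      intro k
      unfold genFun
      rw [tsum_eq_single (Pi.single k 1)]
      · rw [hinit, if_pos rfl, one_mul]
        rw [Finset.prod_eq_single k (fun j _ hj => by simp [Pi.single_apply, hj])
          (fun h => absurd (Finset.mem_univ k) h)]
        simp
      · intro z hz; rw [hinit, if_neg hz, zero_mul]
    | succ m ih =>
      intro k
      rw [hiter k m s hs0 hs1]
      have heq : (fun j => genFun (μ j m) s) = s := funext fun j => ih j
      rw [heq]; exact hfix k
  -- every coordinate of s is < 1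
  have hslt : ∀ k, s k < 1 := by
    obtain ⟨j0, hj0ne⟩ := Function.ne_iff.mp hne
    have hj0 : s j0 < 1 := lt_of_le_of_ne (hs1 j0) hj0ne
    intro k
    obtain ⟨m, z, hzj, hμz⟩ := hirr k j0
    set f : (Fin K → ℕ) → ℝ := fun w => μ k m w * ∏ j, s j ^ w j with hfdef
    have hfs : Summable f := genFun_summable (hnn k m) (hsummable k m) hs0 hs1
    have hP : ∏ j, s j ^ z j < 1 :=
      lt_of_le_of_lt (prodPow_le_single hs0 hs1 z j0)
        (pow_lt_one₀ (hs0 j0) hj0 hzj.ne')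
    have hsplit : ∑' w, f w = f z + ∑' w, ite (w = z) 0 (f w) := Summable.tsum_eq_add_tsum_ite hfs z
    have hsplitμ : ∑' w, μ k m w = μ k m z + ∑' w, ite (w = z) 0 (μ k m w) :=
      Summable.tsum_eq_add_tsum_ite (hsummable k m) z
    have hiteμ_summ : Summable fun w => ite (w = z) 0 (μ k m w) := by
      refine Summable.of_nonneg_of_le (fun w => ?_) (fun w => ?_) (hsummable k m)
      · split <;> [exact le_refl 0; exact hnn k m w]
      · split <;> [exact hnn k m w; exact le_refl _]
    have hitef_summ : Summable fun w => ite (w = z) 0 (f w) := by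
      refine Summable.of_nonneg_of_le (fun w => ?_) (fun w => ?_) (hsummable k m)
      · split
        · exact le_refl 0
        · exact mul_nonneg (hnn k m w) (prodPow_nonneg hs0 w)
      · split
        · exact hnn k m w
        · calc f w ≤ μ k m w * 1 :=
              mul_le_mul_of_nonneg_left (prodPow_le_one hs0 hs1 w) (hnn k m w)
            _ = μ k m w := mul_one _
    have hite_le : (∑' w, ite (w = z) 0 (f w)) ≤ ∑' w, ite (w = z) 0 (μ k m w) := by
      refine Summable.tsum_le_tsum (fun w => ?_) hitef_summ hiteμ_summ
      split
      · exact le_refl 0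
      · calc f w ≤ μ k m w * 1 :=
              mul_le_mul_of_nonneg_left (prodPow_le_one hs0 hs1 w) (hnn k m w)
          _ = μ k m w := mul_one _
    have h1mu : (∑' w, ite (w = z) 0 (μ k m w)) = 1 - μ k m z := by
      rw [htsum1 k m] at hsplitμ; linarith
    have hsk : s k = f z + ∑' w, ite (w = z) 0 (f w) := by
      rw [← hFix m k]; exact hsplit
    have hfz : f z < μ k m z * 1 := by
      exact mul_lt_mul_of_pos_left hP hμz
    calc s k = f z + ∑' w, ite (w = z) 0 (f w) := hsk
      _ ≤ f z + (1 - μ k m z) := by linarith [hite_le, h1mu.le, h1mu.ge]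
      _ < μ k m z * 1 + (1 - μ k m z) := by linarith
      _ = 1 := by ring
  -- the sup of s is < 1
  set c : ℝ := Finset.univ.sup' Finset.univ_nonempty s with hcdef
  have hcs : ∀ j, s j ≤ c := fun j => Finset.le_sup' s (Finset.mem_univ j)
  have hc0 : 0 ≤ c := le_trans (hs0 k0) (hcs k0)
  have hc1 : c < 1 := (Finset.sup'_lt_iff Finset.univ_nonempty).mpr fun j _ => hslt j
  -- q ≤ s
  have hle : ∀ m k, μ k m 0 ≤ s k := by
    intro m
    induction m with
    | zero =>
      intro k
      rw [hinit, if_neg]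
      · exact hs0 k
      · intro h
        have := congrFun h k
        simp [Pi.single_eq_same] at this
    | succ m ih =>
      intro k
      have h0 : μ k (m + 1) 0 = genFun (μ k (m + 1)) (fun _ => 0) := (genFun_zero _).symm
      rw [h0, hiter k m _ (fun _ => le_refl 0) (fun _ => zero_le_one)]
      have he : (fun j => genFun (μ j m) (fun _ => 0)) = fun j => μ j m 0 :=
        funext fun j => genFun_zero _
      rw [he, ← hfix k]
      exact genFun_mono (hnn k 1) (hsummable k 1) (fun j => hnn j m 0) (fun j => ih j) hs1
  have hqs : ∀ k, q k ≤ s k := fun k =>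
    le_of_tendsto (hq k) (Eventually.of_forall fun m => hle m k)
  -- s ≤ q
  have hsq : ∀ k, s k ≤ q k := by
    intro k
    have key : ∀ N : ℕ, s k ≤ q k + c ^ N := by
      intro N
      set F : Finset (Fin K → ℕ) := Fintype.piFinset fun _ => Finset.range (N + 1) with hF
      have h0F : (0 : Fin K → ℕ) ∈ F := by
        simp [hF, Fintype.mem_piFinset, Nat.succ_pos]
      have hbound : ∀ m, s k ≤ (μ k m 0 + ∑ z ∈ F.erase 0, μ k m z) + c ^ N := by
        intro m
        set f : (Fin K → ℕ) → ℝ := fun w => μ k m w * ∏ j, s j ^ w j with hfdef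
        have hfs : Summable f := genFun_summable (hnn k m) (hsummable k m) hs0 hs1
        have hsplit : (∑ z ∈ F, f z) + ∑' z : ↑((F : Set (Fin K → ℕ))ᶜ), f z = ∑' z, f z :=
          Summable.sum_add_tsum_compl hfs
        have htail : (∑' z : ↑((F : Set (Fin K → ℕ))ᶜ), f z) ≤ c ^ N := by
          have hterm : ∀ z : ↑((F : Set (Fin K → ℕ))ᶜ), f (z : Fin K → ℕ) ≤
              c ^ N * μ k m (z : Fin K → ℕ) := by
            rintro ⟨z, hz⟩
            have hzF : z ∉ F := hz
            have hz' : ∃ j, N < z j := by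
              by_contra hcon
              push_neg at hcon
              exact hzF (by simp [hF, Fintype.mem_piFinset, Finset.mem_range,
                Nat.lt_succ_iff, hcon])
            obtain ⟨j, hj⟩ := hz'
            have h1 : ∏ i, s i ^ z i ≤ c ^ N := by
              calc ∏ i, s i ^ z i ≤ s j ^ z j := prodPow_le_single hs0 hs1 z j
                _ ≤ c ^ z j := pow_le_pow_left₀ (hs0 j) (hcs j) _
                _ ≤ c ^ N := pow_le_pow_of_le_one hc0 hc1.le hj.le
            calc f z = μ k m z * ∏ i, s i ^ z i := rfl
              _ ≤ μ k m z * c ^ N := mul_le_mul_of_nonneg_left h1 (hnn k m z)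
              _ = c ^ N * μ k m z := mul_comm _ _
          calc (∑' z : ↑((F : Set (Fin K → ℕ))ᶜ), f z)
              ≤ ∑' z : ↑((F : Set (Fin K → ℕ))ᶜ), c ^ N * μ k m (z : Fin K → ℕ) :=
                Summable.tsum_le_tsum hterm (hfs.subtype _) (((hsummable k m).subtype _).mul_left _)
            _ = c ^ N * ∑' z : ↑((F : Set (Fin K → ℕ))ᶜ), μ k m (z : Fin K → ℕ) :=
                tsum_mul_left
            _ ≤ c ^ N * 1 := by
                refine mul_le_mul_of_nonneg_left ?_ (pow_nonneg hc0 N)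
                rw [← htsum1 k m]
                exact Summable.tsum_subtype_le (μ k m) _ (hnn k m) (hsummable k m)
            _ = c ^ N := mul_one _
        have hhead : (∑ z ∈ F, f z) ≤ μ k m 0 + ∑ z ∈ F.erase 0, μ k m z := by
          rw [← Finset.add_sum_erase F f h0F]
          have hf0 : f 0 = μ k m 0 := by simp [hfdef]
          rw [hf0]
          refine add_le_add_right (Finset.sum_le_sum fun z _ => ?_) _
          calc f z ≤ μ k m z * 1 :=
              mul_le_mul_of_nonneg_left (prodPow_le_one hs0 hs1 z) (hnn k m z)
            _ = μ k m z := mul_one _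
        have hsk : s k = ∑' z, f z := (hFix m k).symm
        calc s k = (∑ z ∈ F, f z) + ∑' z : ↑((F : Set (Fin K → ℕ))ᶜ), f z := by
              rw [hsk, hsplit]
          _ ≤ (μ k m 0 + ∑ z ∈ F.erase 0, μ k m z) + c ^ N := add_le_add hhead htail
      have hlim : Tendsto (fun m => (μ k m 0 + ∑ z ∈ F.erase 0, μ k m z) + c ^ N) atTop
          (nhds ((q k + 0) + c ^ N)) := by
        refine Tendsto.add (Tendsto.add (hq k) ?_) tendsto_const_nhds
        have : Tendsto (fun m => ∑ z ∈ F.erase 0, μ k m z) atTop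
            (nhds (∑ z ∈ F.erase 0, (0 : ℝ))) :=
          tendsto_finset_sum _ fun z hz => htrans z (Finset.ne_of_mem_erase hz) k
        simpa using this
      have := ge_of_tendsto' hlim hbound
      linarith
    have hlim2 : Tendsto (fun N : ℕ => q k + c ^ N) atTop (nhds (q k + 0)) :=
      tendsto_const_nhds.add (tendsto_pow_atTop_nhds_zero_of_lt_one hc0 hc1)
    have := ge_of_tendsto' hlim2 key
    linarith
  have hsq' : s = q := funext fun k => le_antisymm (hsq k) (hqs k)
  refine ⟨hsq', fun k => ?_⟩
  rw [← hsq']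
  exact hslt k
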